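/- arXiv:2005.03714 — 5 statements merged into one kernel-verified Lean document; each statement's English description precedes it below -/
import Mathlib

section
/- Let a, b, c, d, e be real numbers with a = (D-E)(1-B)^2, b = 2α(1-E)(A-B), c = -(D-E)(1+B)^2, e = -2α(1+E)(A-B), where -1 ≤ B < A ≤ 1, -1 ≤ E < D ≤ 1, and αE < 0. Then for every real σ ≤ -1/2, we have 2ac + d^2 + (b+e)cσ ≥ 2ac + d^2 - (1/2)(b+e)c = 2(D-E)(1+B)^2((D-E)(1-B)^2 - αE(A-B)) where d = 2(D-E)(1-B^2), and this quantity is nonnegative. -/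
/-- lower bound for `2ac + d² + (b+e)cσ` for `σ ≤ -1/2`, with the
closed form of the bound, and its nonnegativity. -/
theorem stmt_0 (A B D E α σ a b c d e : ℝ)
    (hB : -1 ≤ B) (hBA : B < A) (hA : A ≤ 1)
    (hE : -1 ≤ E) (hED : E < D) (hD : D ≤ 1)
    (hαE : α * E < 0)
    (ha : a = (D - E) * (1 - B)^2)
    (hb : b = 2 * α * (1 - E) * (A - B))
    (hc : c = -(D - E) * (1 + B)^2)
    (hd : d = 2 * (D - E) * (1 - B^2))
    (he : e = -2 * α * (1 + E) * (A - B))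
    (hσ : σ ≤ -(1/2)) :
    2*a*c + d^2 + (b + e)*c*σ ≥ 2*a*c + d^2 - (1/2)*(b + e)*c ∧
    2*a*c + d^2 - (1/2)*(b + e)*c
      = 2*(D - E)*(1 + B)^2*((D - E)*(1 - B)^2 - α*E*(A - B)) ∧
    0 ≤ 2*(D - E)*(1 + B)^2*((D - E)*(1 - B)^2 - α*E*(A - B)) := by
  have hAB : 0 < A - B := by linarith
  have hDE : 0 < D - E := by linarith
  have hkey : (b + e) * c ≤ 0 := by
    have : (b + e) * c = 4 * (α * E) * (A - B) * ((D - E) * (1 + B)^2) := by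
      rw [hb, he, hc]; ring
    rw [this]
    have h1 : 0 ≤ (D - E) * (1 + B)^2 := by positivity
    have h2 : 4 * (α * E) * (A - B) ≤ 0 := by nlinarith
    exact mul_nonpos_of_nonpos_of_nonneg h2 h1
  refine ⟨?_, by rw [ha, hb, hc, hd, he]; ring, ?_⟩
  · nlinarith [mul_le_mul_of_nonpos_left hσ hkey]
  · have h3 : 0 ≤ (D - E) * (1 - B)^2 - α * E * (A - B) := by nlinarith
    positivity
end

section
/- Let a = (D-E)(1-A)(1-B), b = 2α(1-E)(A-B), c = -(D-E)(1+A)(1+B), d = 2(D-E)(1-AB), e = -2α(1+E)(A-B), where -1 ≤ B < A ≤ 1, -1 ≤ E < D ≤ 1, and αE < 0. Then for every real σ ≤ -1/2, 2ac + d² + (b+e)cσ ≥ 2ac + d² - (1/2)(b+e)c = 2(D-E)((D-E)((1-AB)² + (A-B)²) - αE(A-B)(1+A)(1+B)) ≥ 0. -/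
/-- lower bound for `2ac + d² + (b+e)cσ` for `σ ≤ -1/2` with the
constants of Lemma 2.3, the closed form of the bound, and its nonnegativity. -/
theorem stmt_5 (A B D E α σ a b c d e : ℝ)
    (hB : -1 ≤ B) (hBA : B < A) (hA : A ≤ 1)
    (hE : -1 ≤ E) (hED : E < D) (hD : D ≤ 1)
    (hαE : α * E < 0)
    (ha : a = (D - E) * (1 - A) * (1 - B))
    (hb : b = 2 * α * (1 - E) * (A - B))
    (hc : c = -(D - E) * (1 + A) * (1 + B))
    (hd : d = 2 * (D - E) * (1 - A*B))
    (he : e = -2 * α * (1 + E) * (A - B))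
    (hσ : σ ≤ -(1/2)) :
    2*a*c + d^2 + (b + e)*c*σ ≥ 2*a*c + d^2 - (1/2)*(b + e)*c ∧
    2*a*c + d^2 - (1/2)*(b + e)*c
      = 2*(D - E)*((D - E)*((1 - A*B)^2 + (A - B)^2)
          - α*E*(A - B)*(1 + A)*(1 + B)) ∧
    0 ≤ 2*(D - E)*((D - E)*((1 - A*B)^2 + (A - B)^2)
          - α*E*(A - B)*(1 + A)*(1 + B)) := by
  have hAB : 0 < A - B := by linarith
  have hDE : 0 < D - E := by linarith
  have h1A : 0 ≤ 1 + A := by linarith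
  have h1B : 0 ≤ 1 + B := by linarith
  have hP : 0 ≤ (A - B) * ((D - E) * ((1 + A) * (1 + B))) :=
    mul_nonneg hAB.le (mul_nonneg hDE.le (mul_nonneg h1A h1B))
  have hbc : (b + e) * c ≤ 0 := by
    have h : (b + e) * c = 4 * (α * E) * ((A - B) * ((D - E) * ((1 + A) * (1 + B)))) := by
      rw [hb, he, hc]; ring
    rw [h]
    exact mul_nonpos_of_nonpos_of_nonneg (by linarith) hP
  refine ⟨?_, by rw [ha, hb, hc, hd, he]; ring, ?_⟩
  · nlinarith [mul_nonneg (neg_nonneg.mpr hbc) (by linarith : (0:ℝ) ≤ -(1/2) - σ)]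
  · have h2 : 0 ≤ (-(α * E)) * ((A - B) * ((1 + A) * (1 + B))) :=
      mul_nonneg (by linarith) (mul_nonneg hAB.le (mul_nonneg h1A h1B))
    have h3 : 0 ≤ (D - E) * ((1 - A*B)^2 + (A - B)^2) :=
      mul_nonneg hDE.le (by positivity)
    nlinarith [h2, h3]
end

section
/- Let f be analytic on the open unit disc with f(0) = 0, f'(0) = 1, f nonvanishing on the punctured disc, and suppose |z f'(z)/f(z) · (1 + z f''(z)/f'(z) - z f'(z)/f(z))| < 1 - λ for all z in the disc, where 0 ≤ λ < 1. Then |z f'(z)/f(z) - 1| < 1 - λ throughout the disc, i.e., f ∈ S*(λ). -/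
/-- The open unit disc in `ℂ`. -/
def unitDisc : Set ℂ := Metric.ball 0 1

/-- Corollary 2.4: if
`|z f'(z)/f(z) · (1 + z f''(z)/f'(z) - z f'(z)/f(z))| < 1 - λ` on the punctured
disc, then `|z f'(z)/f(z) - 1| < 1 - λ`, i.e. `f ∈ S*(λ)`. -/
theorem stmt_8 (l : ℝ) (f : ℂ → ℂ)
    (hl0 : 0 ≤ l) (hl1 : l < 1)
    (hf : AnalyticOn ℂ f unitDisc) (hf0 : f 0 = 0) (hf'0 : deriv f 0 = 1)
    (hfz : ∀ z ∈ unitDisc, z ≠ 0 → f z ≠ 0)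
    (hbd : ∀ z ∈ unitDisc, z ≠ 0 →
      ‖(z * deriv f z / f z
        * (1 + z * deriv (deriv f) z / deriv f z - z * deriv f z / f z))‖
        < 1 - l) :
    ∀ z ∈ unitDisc, z ≠ 0 → ‖z * deriv f z / f z - 1‖ < 1 - l := by
  have hD : IsOpen unitDisc := Metric.isOpen_ball
  have h0D : (0 : ℂ) ∈ unitDisc := Metric.mem_ball_self one_pos
  have h1l : (0 : ℝ) < 1 - l := by linarith
  have hfN : AnalyticOnNhd ℂ f unitDisc := (hD.analyticOn_iff_analyticOnNhd).mp hf
  have hf'N : AnalyticOnNhd ℂ (deriv f) unitDisc := hfN.deriv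
  set p : ℂ → ℂ := fun z => deriv f z / dslope f 0 z with hp_def
  have hds0 : dslope f 0 0 = 1 := by rw [dslope_same, hf'0]
  have hp0 : p 0 = 1 := by simp [hp_def, hds0, hf'0]
  have hds : ∀ z : ℂ, z ≠ 0 → dslope f 0 z = f z / z := by
    intro z hz
    rw [dslope_of_ne _ hz, slope_def_field, hf0]
    simp
  have hp_eq : ∀ z : ℂ, z ≠ 0 → p z = z * deriv f z / f z := by
    intro z hz
    rw [hp_def]
    simp only
    rw [hds z hz, div_div_eq_mul_div]
    ring
  -- p is analytic on the disc
  have hpA : AnalyticOnNhd ℂ p unitDisc := by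
    intro z hz
    by_cases hz0 : z = 0
    · subst hz0
      obtain ⟨q, hq⟩ := hfN 0 h0D
      have hdsA : AnalyticAt ℂ (dslope f 0) 0 :=
        (hq.has_fpower_series_dslope_fslope).analyticAt
      exact (hf'N 0 h0D).div hdsA (by rw [hds0]; exact one_ne_zero)
    · have hev : (fun w : ℂ => w * deriv f w / f w) =ᶠ[nhds z] p := by
        filter_upwards [eventually_ne_nhds hz0] with w hw
        exact (hp_eq w hw).symm
      exact ((analyticAt_id.mul (hf'N z hz)).div (hfN z hz) (hfz z hz hz0)).congr hev
  -- compute z * deriv p z at points where deriv f ≠ 0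
  have hkey : ∀ z ∈ unitDisc, z ≠ 0 → deriv f z ≠ 0 →
      z * deriv p z = z * deriv f z / f z
        * (1 + z * deriv (deriv f) z / deriv f z - z * deriv f z / f z) := by
    intro z hz hz0 hfz'
    have hfzne : f z ≠ 0 := hfz z hz hz0
    have hev : p =ᶠ[nhds z] (fun w : ℂ => w * deriv f w / f w) := by
      filter_upwards [eventually_ne_nhds hz0] with w hw
      exact hp_eq w hw
    have hdf : HasDerivAt f (deriv f z) z := (hfN z hz).differentiableAt.hasDerivAt
    have hdf' : HasDerivAt (deriv f) (deriv (deriv f) z) z :=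
      (hf'N z hz).differentiableAt.hasDerivAt
    have hnum : HasDerivAt (fun w : ℂ => w * deriv f w)
        (1 * deriv f z + z * deriv (deriv f) z) z := (hasDerivAt_id z).mul hdf'
    have hG : HasDerivAt (fun w : ℂ => w * deriv f w / f w)
        (((1 * deriv f z + z * deriv (deriv f) z) * f z
          - z * deriv f z * deriv f z) / f z ^ 2) z := hnum.div hdf hfzne
    have : deriv p z = ((1 * deriv f z + z * deriv (deriv f) z) * f z
        - z * deriv f z * deriv f z) / f z ^ 2 := by
      rw [hev.deriv_eq, hG.deriv]
    rw [this]
    field_simp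
  -- the function g z = z * deriv p z
  set g : ℂ → ℂ := fun z => z * deriv p z with hg_def
  have hgA : AnalyticOnNhd ℂ g unitDisc := fun z hz =>
    analyticAt_id.mul (hpA.deriv z hz)
  have hg0 : g 0 = 0 := by simp [hg_def]
  -- bound |g| ≤ 1 - l on the disc
  have hg_lt : ∀ z ∈ unitDisc, z ≠ 0 → deriv f z ≠ 0 →
      ‖g z‖ < 1 - l := by
    intro z hz hz0 hfz'
    rw [hg_def]
    simp only
    rw [hkey z hz hz0 hfz']
    exact hbd z hz hz0
  have hg_le : ∀ z ∈ unitDisc, ‖g z‖ ≤ 1 - l := by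
    intro z hz
    by_cases hz0 : z = 0
    · subst hz0; rw [hg0]; simpa using h1l.le
    by_cases hfz' : deriv f z = 0
    · -- limit argument: zeros of deriv f are isolated
      rcases (hf'N z hz).eventually_eq_zero_or_eventually_ne_zero with h | h
      · exfalso
        have : Set.EqOn (deriv f) 0 unitDisc :=
          AnalyticOnNhd.eqOn_zero_of_preconnected_of_eventuallyEq_zero hf'N
            ((convex_ball (0:ℂ) 1).isPreconnected) hz h
        have := this h0D
        rw [hf'0] at this
        exact one_ne_zero this
      · have hevD : ∀ᶠ w in nhdsWithin z {z}ᶜ, w ∈ unitDisc :=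
          Filter.Eventually.filter_mono nhdsWithin_le_nhds (hD.mem_nhds hz)
        have hev0 : ∀ᶠ w in nhdsWithin z {z}ᶜ, w ≠ 0 :=
          eventually_ne_nhdsWithin hz0
        have hev : ∀ᶠ w in nhdsWithin z {z}ᶜ, ‖g w‖ ≤ 1 - l := by
          filter_upwards [h, hevD, hev0] with w hw1 hw2 hw3
          exact (hg_lt w hw2 hw3 hw1).le
        have hT : Filter.Tendsto (fun w => ‖g w‖)
            (nhdsWithin z {z}ᶜ) (nhds (‖g z‖)) :=
          (continuous_norm.continuousAt.comp
            (hgA z hz).continuousAt).tendsto.mono_left nhdsWithin_le_nhds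
        exact le_of_tendsto hT hev
    · exact (hg_lt z hz hz0 hfz').le
  -- Schwarz lemma: |g z| ≤ (1 - l) * |z|
  have hg2 : ∀ z ∈ unitDisc, ‖g z‖ ≤ (1 - l) * ‖z‖ := by
    intro z hz
    refine le_of_forall_pos_le_add fun ε hε => ?_
    have hmaps : Set.MapsTo g (Metric.ball 0 1) (Metric.ball (g 0) (1 - l + ε)) := by
      intro w hw
      rw [hg0, Metric.mem_ball, dist_zero_right]
      calc ‖g w‖ ≤ 1 - l := hg_le w hw
        _ < 1 - l + ε := by linarith
    have := Complex.dist_le_div_mul_dist_of_mapsTo_ball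
      (hgA.differentiableOn) (hmaps.mono_right Metric.ball_subset_closedBall) (show z ∈ Metric.ball (0:ℂ) 1 from hz)
    rw [hg0, dist_zero_right, dist_zero_right, div_one] at this
    have hz1 : ‖z‖ < 1 := by
      simpa using Metric.mem_ball.mp (show z ∈ Metric.ball (0:ℂ) 1 from hz)
    have habs : (0:ℝ) ≤ ‖z‖ := norm_nonneg z
    calc ‖g z‖ = ‖g z‖ := rfl
      _ ≤ (1 - l + ε) * ‖z‖ := this
      _ = (1 - l) * ‖z‖ + ε * ‖z‖ := by
          ring
      _ ≤ (1 - l) * ‖z‖ + ε := by nlinarith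
  -- deduce |deriv p| ≤ 1 - l on the disc
  have hp' : ∀ z ∈ unitDisc, ‖deriv p z‖ ≤ 1 - l := by
    intro z hz
    by_cases hz0 : z = 0
    · subst hz0
      have hevD : ∀ᶠ w in nhdsWithin (0:ℂ) {(0:ℂ)}ᶜ, w ∈ unitDisc :=
        Filter.Eventually.filter_mono nhdsWithin_le_nhds (hD.mem_nhds h0D)
      have hev : ∀ᶠ w in nhdsWithin (0:ℂ) {(0:ℂ)}ᶜ,
          ‖deriv p w‖ ≤ 1 - l := by
        filter_upwards [hevD, self_mem_nhdsWithin] with w hw1 hw2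
        have hw0 : w ≠ 0 := hw2
        have h1 : ‖w‖ * ‖deriv p w‖ ≤ (1 - l) * ‖w‖ := by
          have := hg2 w hw1
          rwa [hg_def, norm_mul] at this
        have hwpos : 0 < ‖w‖ := norm_pos_iff.mpr hw0
        nlinarith [norm_nonneg (deriv p w)]
      have hT : Filter.Tendsto (fun w => ‖deriv p w‖)
          (nhdsWithin (0:ℂ) {(0:ℂ)}ᶜ) (nhds (‖deriv p 0‖)) :=
        (continuous_norm.continuousAt.comp
          (hpA.deriv 0 h0D).continuousAt).tendsto.mono_left nhdsWithin_le_nhds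
      exact le_of_tendsto hT hev
    · have h1 : ‖z‖ * ‖deriv p z‖ ≤ (1 - l) * ‖z‖ := by
        have := hg2 z hz
        rwa [hg_def, norm_mul] at this
      have hwpos : 0 < ‖z‖ := norm_pos_iff.mpr hz0
      nlinarith [norm_nonneg (deriv p z)]
  -- mean value inequality
  intro z hz hz0
  have hmv := (convex_ball (0:ℂ) 1).norm_image_sub_le_of_norm_deriv_le
    (fun x hx => (hpA x hx).differentiableAt) hp'
    h0D (show z ∈ Metric.ball (0:ℂ) 1 from hz)
  rw [hp0, hp_eq z hz0, sub_zero] at hmv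
  have hz1 : ‖z‖ < 1 := by
    simpa using Metric.mem_ball.mp (show z ∈ Metric.ball (0:ℂ) 1 from hz)
  calc ‖z * deriv f z / f z - 1‖ = ‖z * deriv f z / f z - 1‖ := rfl
    _ ≤ (1 - l) * ‖z‖ := hmv
    _ < 1 - l := by
        exact mul_lt_of_lt_one_right h1l hz1
end

section
/- Let 0 ≤ λ < 1 and set δ = λ/(1 + 3λ + λ²). If f is analytic on the unit disc with f(0)=0, f'(0)=1, f and f' nonvanishing on the punctured disc, and |1 + z f''(z)/f'(z) - z f'(z)/f(z)| < δ·|1 + z f''(z)/f'(z) + z f'(z)/f(z)| for all z in the disc, then |z f'(z)/f(z) - 1| < λ·|z f'(z)/f(z) + 1| throughout the disc, i.e., f ∈ S*[λ]. -/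
open Metric Set Filter Complex Topology

set_option maxHeartbeats 1000000 in
/-- Corollary 2.5, case `n = 1`, `μ = A - B`: if
`|1 + z f''/f' - z f'/f| < δ |1 + z f''/f' + z f'/f|` with `δ = λ/(1+3λ+λ²)`,
then `|z f'/f - 1| < λ |z f'/f + 1|`, i.e. `f ∈ S*[λ]`. -/
theorem stmt_12 (l δ : ℝ) (f : ℂ → ℂ)
    (hl0 : 0 ≤ l) (hl1 : l < 1) (hδ : δ = l / (1 + 3 * l + l^2))
    (hf : AnalyticOn ℂ f unitDisc) (hf0 : f 0 = 0) (hf'0 : deriv f 0 = 1)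
    (hfz : ∀ z ∈ unitDisc, z ≠ 0 → f z ≠ 0)
    (hf'z : ∀ z ∈ unitDisc, z ≠ 0 → deriv f z ≠ 0)
    (hbd : ∀ z ∈ unitDisc, z ≠ 0 →
      ‖1 + z * deriv (deriv f) z / deriv f z - z * deriv f z / f z‖
        < δ * ‖1 + z * deriv (deriv f) z / deriv f z + z * deriv f z / f z‖) :
    ∀ z ∈ unitDisc, z ≠ 0 →
      ‖z * deriv f z / f z - 1‖ < l * ‖z * deriv f z / f z + 1‖ := by
  have hOpen : IsOpen unitDisc := isOpen_ball
  have h0mem : (0:ℂ) ∈ unitDisc := by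
    simp [unitDisc]
  -- dispose of the case l = 0
  rcases eq_or_lt_of_le hl0 with hl | hlpos
  · exfalso
    have hmem : (1/2 : ℂ) ∈ unitDisc := by
      simp [unitDisc]
      norm_num
    have h := hbd (1/2) hmem (by norm_num)
    rw [hδ, ← hl] at h
    norm_num at h
    exact (norm_nonneg _).not_gt h
  -- the auxiliary function p
  set p : ℂ → ℂ := fun w => if w = 0 then 1 else w * deriv f w / f w with hp_def
  have hp0 : p 0 = 1 := if_pos rfl
  have hpval : ∀ w : ℂ, w ≠ 0 → p w = w * deriv f w / f w := fun w hw => if_neg hw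
  have hfn : AnalyticOnNhd ℂ f unitDisc := (hOpen.analyticOn_iff_analyticOnNhd).1 hf
  have hf'n : AnalyticOnNhd ℂ (deriv f) unitDisc := hfn.deriv
  have hpdiff : DifferentiableOn ℂ p unitDisc := by
    rw [← Complex.differentiableOn_compl_singleton_and_continuousAt_iff
      (hOpen.mem_nhds h0mem)]
    constructor
    · rintro w ⟨hw, hwne⟩
      simp only [mem_singleton_iff] at hwne
      have h1 : DifferentiableAt ℂ (fun w => w * deriv f w / f w) w :=
        (differentiableAt_id.mul ((hf'n w hw).differentiableAt)).div
          ((hfn w hw).differentiableAt) (hfz w hw hwne)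
      refine (h1.congr_of_eventuallyEq ?_).differentiableWithinAt
      filter_upwards [isOpen_ne.mem_nhds hwne] with x hx
      exact hpval x hx
    · rw [← continuousWithinAt_compl_self]
      have h1 : Tendsto (fun w : ℂ => f w / w) (𝓝[≠] 0) (𝓝 1) := by
        have := hasDerivAt_iff_tendsto_slope.mp ((hfn 0 h0mem).differentiableAt.hasDerivAt)
        rw [hf'0] at this
        refine this.congr (fun x => ?_)
        simp [slope_def_field, hf0]
      have h2 : Tendsto (fun w : ℂ => deriv f w) (𝓝[≠] 0) (𝓝 1) := by
        have := ((hf'n 0 h0mem).differentiableAt.continuousAt).tendsto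
        rw [hf'0] at this
        exact this.mono_left nhdsWithin_le_nhds
      have h3 : Tendsto p (𝓝[≠] 0) (𝓝 1) := by
        have := (Tendsto.div h2 h1 one_ne_zero)
        rw [div_one] at this
        refine this.congr' ?_
        filter_upwards [self_mem_nhdsWithin] with x hx
        rw [hpval x hx, Pi.div_apply, div_div_eq_mul_div]
        ring
      rw [ContinuousWithinAt, hp0]
      exact h3
  have hpc : ∀ w ∈ unitDisc, ContinuousAt p w := fun w hw =>
    (hpdiff.differentiableAt (hOpen.mem_nhds hw)).continuousAt
  -- enter the contradiction
  intro z hzmem hzne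
  by_contra hcon
  push_neg at hcon
  rw [← hpval z hzne] at hcon
  have hz1 : ‖z‖ < 1 := by simpa [unitDisc] using hzmem
  -- the bad set K
  set K : Set ℂ := {w | w ∈ closedBall (0:ℂ) ‖z‖ ∧
      l * ‖p w + 1‖ ≤ ‖p w - 1‖} with hK_def
  have hKsub : ∀ w ∈ K, w ∈ unitDisc := by
    rintro w ⟨hw1, -⟩
    simp only [mem_closedBall, dist_zero_right] at hw1
    simp only [unitDisc, mem_ball, dist_zero_right]
    exact lt_of_le_of_lt hw1 hz1
  have hzK : z ∈ K := ⟨by simp [mem_closedBall], hcon⟩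
  have hball : closedBall (0:ℂ) ‖z‖ ⊆ unitDisc := by
    intro w hw
    simp only [mem_closedBall, dist_zero_right] at hw
    simp only [unitDisc, mem_ball, dist_zero_right]
    exact lt_of_le_of_lt hw hz1
  have hφc : ContinuousOn (fun w => ‖p w - 1‖ - l * ‖p w + 1‖)
      unitDisc := by
    have h1 : ContinuousOn p unitDisc := hpdiff.continuousOn
    exact (continuous_norm.comp_continuousOn (h1.sub continuousOn_const)).sub
      (continuousOn_const.mul
        (continuous_norm.comp_continuousOn (h1.add continuousOn_const)))
  have hKc : IsCompact K := by
    have hKeq : K = closedBall (0:ℂ) ‖z‖ ∩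
        (fun w => ‖p w - 1‖ - l * ‖p w + 1‖) ⁻¹' (Ici 0) := by
      ext w
      simp only [hK_def, mem_setOf_eq, mem_inter_iff, mem_preimage, mem_Ici]
      constructor
      · rintro ⟨h1, h2⟩; exact ⟨h1, by linarith⟩
      · rintro ⟨h1, h2⟩; exact ⟨h1, by linarith⟩
    have hclosed : IsClosed K := by
      rw [hKeq]
      exact (hφc.mono hball).preimage_isClosed_of_isClosed isClosed_closedBall isClosed_Ici
    exact (isCompact_closedBall (0:ℂ) ‖z‖).of_isClosed_subset hclosed (fun w hw => hw.1)
  obtain ⟨z0, hz0K, hz0min⟩ := hKc.exists_isMinOn ⟨z, hzK⟩ continuous_norm.continuousOn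
  have hz0disc : z0 ∈ unitDisc := hKsub z0 hz0K
  have hz0ne : z0 ≠ 0 := by
    rintro rfl
    have := hz0K.2
    rw [hp0] at this
    norm_num at this
    nlinarith
  have hrpos : (0:ℝ) < ‖z0‖ := by simpa [norm_pos_iff] using hz0ne
  have hr1 : ‖z0‖ < 1 := by simpa [unitDisc] using hz0disc
  -- strict inequality inside radius ‖z0‖
  have hsmall : ∀ w : ℂ, ‖w‖ < ‖z0‖ →
      ‖p w - 1‖ < l * ‖p w + 1‖ := by
    intro w hw
    by_contra hcon2
    push_neg at hcon2
    have hwz : ‖w‖ ≤ ‖z‖ := le_trans hw.le (hz0min hzK)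
    have hwK : w ∈ K := ⟨by simpa [mem_closedBall, dist_zero_right] using hwz, hcon2⟩
    exact absurd (hz0min hwK) (not_le.mpr hw)
  -- non-strict inequality on the closed ball of radius ‖z0‖
  have hle : ∀ w : ℂ, ‖w‖ ≤ ‖z0‖ →
      ‖p w - 1‖ ≤ l * ‖p w + 1‖ := by
    intro w hw
    have hwd : w ∈ unitDisc := by
      simp only [unitDisc, mem_ball, dist_zero_right]
      exact lt_of_le_of_lt hw hr1
    have htend : Tendsto (fun t : ℝ => ‖p ((t:ℂ)*w) - 1‖
        - l * ‖p ((t:ℂ)*w) + 1‖) (𝓝[<] (1:ℝ))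
        (𝓝 (‖p w - 1‖ - l * ‖p w + 1‖)) := by
      have hι : Tendsto (fun t : ℝ => (t:ℂ)*w) (𝓝[<] (1:ℝ)) (𝓝 w) := by
        have hc : Continuous (fun t : ℝ => (t:ℂ)*w) := Complex.continuous_ofReal.mul continuous_const
        have h1 : Tendsto (fun t : ℝ => (t:ℂ)*w) (𝓝[<] (1:ℝ)) (𝓝 ((1:ℝ)*w)) :=
          ((hc.tendsto 1).mono_left nhdsWithin_le_nhds)
        simpa using h1
      have hφw : ContinuousAt (fun s : ℂ => ‖p s - 1‖
          - l * ‖p s + 1‖) w := by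
        have hpcw := hpc w hwd
        exact (continuous_norm.continuousAt.comp (hpcw.sub continuousAt_const)).sub
          (continuousAt_const.mul
            (continuous_norm.continuousAt.comp (hpcw.add continuousAt_const)))
      exact hφw.tendsto.comp hι
    have hev : ∀ᶠ (t:ℝ) in 𝓝[<] (1:ℝ), ‖p ((t:ℂ)*w) - 1‖
        - l * ‖p ((t:ℂ)*w) + 1‖ ≤ 0 := by
      filter_upwards [Ioo_mem_nhdsLT_of_mem (show (1:ℝ) ∈ Ioc (0:ℝ) 1 by norm_num)]
        with t ht
      obtain ⟨ht0, ht1⟩ := ht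
      have hnorm : ‖(t:ℂ)*w‖ < ‖z0‖ := by
        rw [norm_mul, Complex.norm_real, Real.norm_eq_abs, abs_of_pos ht0]
        calc t * ‖w‖ ≤ t * ‖z0‖ := by nlinarith [norm_nonneg w]
          _ < ‖z0‖ := by nlinarith
      have := hsmall _ hnorm
      linarith
    have := le_of_tendsto htend hev
    linarith
  have hEq : ‖p z0 - 1‖ = l * ‖p z0 + 1‖ :=
    le_antisymm (hle z0 le_rfl) hz0K.2
  have hP1 : p z0 + 1 ≠ 0 := by
    intro h
    have h2 : p z0 - 1 = -2 := by
      have : p z0 = -1 := by linear_combination h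
      rw [this]; ring
    rw [h, h2] at hEq
    simp at hEq
  have habs1 : 0 < ‖p z0 + 1‖ := by
    simpa [norm_pos_iff] using hP1
  -- the function W
  set W : ℂ → ℂ := fun w => (p w - 1) / (p w + 1) with hW_def
  have hW0 : W 0 = 0 := by simp [hW_def, hp0]
  have hWz0 : ‖W z0‖ = l := by
    simp only [hW_def, norm_div]
    rw [hEq]
    field_simp
  have hWb : ∀ w : ℂ, ‖w‖ ≤ ‖z0‖ → ‖W w‖ ≤ l := by
    intro w hw
    by_cases h : p w + 1 = 0
    · simp [hW_def, h, hl0]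
    · simp only [hW_def, norm_div]
      rw [div_le_iff₀ (by simpa [norm_pos_iff] using h)]
      exact hle w hw
  have hWsmall : MapsTo W (ball (0:ℂ) ‖z0‖) (ball (0:ℂ) l) := by
    intro w hw
    simp only [mem_ball, dist_zero_right] at hw ⊢
    have h := hsmall w hw
    have hne : p w + 1 ≠ 0 := by
      intro h0
      rw [h0] at h
      have h2 : p w = -1 := by linear_combination h0
      rw [h2] at h
      norm_num at h
    rw [show ‖W w‖ = ‖W w‖ from rfl]
    simp only [hW_def, norm_div]
    rw [div_lt_iff₀ (by simpa [norm_pos_iff] using hne)]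
    exact h
  have hWdiffAt : ∀ w ∈ unitDisc, p w + 1 ≠ 0 → DifferentiableAt ℂ W w := by
    intro w hw hne
    exact ((hpdiff.differentiableAt (hOpen.mem_nhds hw)).sub_const 1).div
      ((hpdiff.differentiableAt (hOpen.mem_nhds hw)).add_const 1) hne
  have hWdiffOn : DifferentiableOn ℂ W (ball (0:ℂ) ‖z0‖) := by
    intro w hw
    simp only [mem_ball, dist_zero_right] at hw
    have hne : p w + 1 ≠ 0 := by
      intro h0
      have h := hsmall w hw
      rw [h0] at h
      have h2 : p w = -1 := by linear_combination h0
      rw [h2] at h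
      norm_num at h
    exact (hWdiffAt w (by
      simp only [unitDisc, mem_ball, dist_zero_right]
      exact hw.trans hr1) hne).differentiableWithinAt
  -- Schwarz lemma
  have hSch : ∀ w ∈ ball (0:ℂ) ‖z0‖, ‖W w‖ ≤ l / ‖z0‖ * ‖w‖ := by
    intro w hw
    have := Complex.dist_le_div_mul_dist_of_mapsTo_ball hWdiffOn
      (by rw [hW0]; exact hWsmall.mono_right ball_subset_closedBall) hw
    simpa [hW0, dist_zero_right] using this
  -- hbd at z0, before abbreviating
  have hB := hbd z0 hz0disc hz0ne
  -- abbreviations at z0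
  set F : ℂ := f z0 with hF_def
  set F1 : ℂ := deriv f z0 with hF1_def
  set F2 : ℂ := deriv (deriv f) z0 with hF2_def
  have hF : F ≠ 0 := hfz z0 hz0disc hz0ne
  have hF1 : F1 ≠ 0 := hf'z z0 hz0disc hz0ne
  set P : ℂ := p z0 with hP_def
  set P' : ℂ := deriv p z0 with hP'_def
  have hpda : HasDerivAt p P' z0 := (hpdiff.differentiableAt (hOpen.mem_nhds hz0disc)).hasDerivAt
  have hWda : HasDerivAt W (2 * P' / (P + 1)^2) z0 := by
    have h := (hpda.sub_const 1).div (hpda.add_const 1) hP1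
    refine h.congr_deriv ?_
    ring
  set d : ℂ := 2 * P' / (P + 1)^2 with hd_def
  -- radial derivative
  have hE : HasDerivAt (fun s : ℂ => W (s * z0)) (d * z0) 1 := by
    have h1 : HasDerivAt (fun s : ℂ => s * z0) z0 1 := by
      simpa using (hasDerivAt_id (1:ℂ)).mul_const z0
    have h2 : HasDerivAt W d ((fun s : ℂ => s * z0) 1) := by simpa using hWda
    exact h2.comp 1 h1
  have hE' : HasDerivAt (fun s : ℂ => W (s * z0)) (d * z0) (((1:ℝ)):ℂ) := by
    simpa using hE
  have hre : HasDerivAt (fun t : ℝ => (W ((t:ℂ) * z0)).re) (d * z0).re 1 :=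
    hE'.real_of_complex
  have him : HasDerivAt (fun t : ℝ => (W ((t:ℂ) * z0)).im) (d * z0).im 1 := by
    have h := ((hE'.const_mul Complex.I).neg).real_of_complex
    have heq : ∀ z : ℂ, (-(Complex.I * z)).re = z.im := by
      intro z; simp [Complex.mul_re]
    simp only [Pi.neg_apply, heq] at h
    exact h
  set q1 : ℝ := ((starRingEnd ℂ) (W z0) * (d * z0)).re with hq1_def
  set q2 : ℝ := ((starRingEnd ℂ) (W z0) * (d * z0)).im with hq2_def
  have hone : ((1:ℝ):ℂ) * z0 = z0 := by norm_num
  have hu : HasDerivAt (fun t : ℝ => (W ((t:ℂ) * z0)).re * (W ((t:ℂ) * z0)).re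
      + (W ((t:ℂ) * z0)).im * (W ((t:ℂ) * z0)).im) (2 * q1) 1 := by
    have h := (hre.mul hre).add (him.mul him)
    rw [hone] at h
    refine h.congr_deriv ?_
    rw [hq1_def]
    simp [Complex.mul_re, Complex.conj_re, Complex.conj_im]
    ring
  have huval : ∀ t : ℝ, (W ((t:ℂ) * z0)).re * (W ((t:ℂ) * z0)).re
      + (W ((t:ℂ) * z0)).im * (W ((t:ℂ) * z0)).im = ‖W ((t:ℂ) * z0)‖ ^ 2 := by
    intro t
    rw [Complex.sq_norm, Complex.normSq_apply]
  -- the radial inequality l^2 ≤ q1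
  have hQrad : l^2 ≤ q1 := by
    have hv : HasDerivAt (fun t : ℝ => l^2 * t^2 - ((W ((t:ℂ) * z0)).re * (W ((t:ℂ) * z0)).re
        + (W ((t:ℂ) * z0)).im * (W ((t:ℂ) * z0)).im)) (l^2 * 2 - 2 * q1) 1 := by
      have h := ((hasDerivAt_pow 2 (1:ℝ)).const_mul (l^2)).sub hu
      refine h.congr_deriv ?_
      norm_num
    have hslope := hasDerivWithinAt_iff_tendsto_slope.mp (hv.hasDerivWithinAt (s := Iio 1))
    rw [show Iio (1:ℝ) \ {1} = Iio 1 by rw [diff_singleton_eq_self (by simp)]] at hslope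
    have hev : ∀ᶠ (t:ℝ) in 𝓝[<] (1:ℝ), slope (fun t : ℝ => l^2 * t^2
        - ((W ((t:ℂ) * z0)).re * (W ((t:ℂ) * z0)).re
        + (W ((t:ℂ) * z0)).im * (W ((t:ℂ) * z0)).im)) 1 t ≤ 0 := by
      filter_upwards [Ioo_mem_nhdsLT_of_mem (show (1:ℝ) ∈ Ioc (0:ℝ) 1 by norm_num)]
        with t ht
      obtain ⟨ht0, ht1⟩ := ht
      have hmem : ((t:ℂ) * z0) ∈ ball (0:ℂ) ‖z0‖ := by
        simp only [mem_ball, dist_zero_right, norm_mul, Complex.norm_real, Real.norm_eq_abs,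
          abs_of_pos ht0]
        nlinarith
      have habs : ‖W ((t:ℂ) * z0)‖ ≤ l * t := by
        have h := hSch _ hmem
        rw [norm_mul, Complex.norm_real, Real.norm_eq_abs, abs_of_pos ht0] at h
        calc ‖W ((t:ℂ) * z0)‖ ≤ l / ‖z0‖ * (t * ‖z0‖) := h
          _ = l * t := by
              have hA : ‖z0‖ ≠ 0 := by
                exact hrpos.ne'
              field_simp
      have hvt : 0 ≤ l^2 * t^2 - ((W ((t:ℂ) * z0)).re * (W ((t:ℂ) * z0)).re
          + (W ((t:ℂ) * z0)).im * (W ((t:ℂ) * z0)).im) := by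
        rw [huval]
        have h2 : ‖W ((t:ℂ) * z0)‖ ^ 2 ≤ (l*t)^2 := by
          apply pow_le_pow_left₀ (norm_nonneg _) habs
        nlinarith
      rw [slope_def_field]
      apply div_nonpos_of_nonneg_of_nonpos
      · have h1 : (W (((1:ℝ):ℂ) * z0)).re * (W (((1:ℝ):ℂ) * z0)).re
            + (W (((1:ℝ):ℂ) * z0)).im * (W (((1:ℝ):ℂ) * z0)).im = l^2 := by
          rw [huval 1, hone, hWz0]
        nlinarith [hvt, h1]
      · linarith
    have := le_of_tendsto hslope hev
    nlinarith
  -- the angular derivative is zero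
  have hq2 : q2 = 0 := by
    have h1 : HasDerivAt (fun s : ℂ => z0 * Complex.exp (s * Complex.I)) (z0 * Complex.I) 0 := by
      have h2 : HasDerivAt (fun s : ℂ => s * Complex.I) Complex.I 0 := by
        simpa using (hasDerivAt_id (0:ℂ)).mul_const Complex.I
      have h3 := (h2.cexp).const_mul z0
      simpa using h3
    have h2 : HasDerivAt W d ((fun s : ℂ => z0 * Complex.exp (s * Complex.I)) 0) := by
      simpa using hWda
    have hE2 : HasDerivAt (fun s : ℂ => W (z0 * Complex.exp (s * Complex.I)))
        (d * (z0 * Complex.I)) ((0:ℝ):ℂ) := by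
      have := h2.comp 0 h1
      rw [Complex.ofReal_zero]; exact this
    have hre2 : HasDerivAt (fun t : ℝ => (W (z0 * Complex.exp ((t:ℂ) * Complex.I))).re)
        (d * (z0 * Complex.I)).re 0 := hE2.real_of_complex
    have him2 : HasDerivAt (fun t : ℝ => (W (z0 * Complex.exp ((t:ℂ) * Complex.I))).im)
        (d * (z0 * Complex.I)).im 0 := by
      have h := ((hE2.const_mul Complex.I).neg).real_of_complex
      have heq : ∀ z : ℂ, (-(Complex.I * z)).re = z.im := by
        intro z; simp [Complex.mul_re]
      simp only [Pi.neg_apply, heq] at h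
      exact h
    have hzero : z0 * Complex.exp (((0:ℝ):ℂ) * Complex.I) = z0 := by
      norm_num
    have hψ : HasDerivAt (fun t : ℝ => (W (z0 * Complex.exp ((t:ℂ) * Complex.I))).re
        * (W (z0 * Complex.exp ((t:ℂ) * Complex.I))).re
        + (W (z0 * Complex.exp ((t:ℂ) * Complex.I))).im
        * (W (z0 * Complex.exp ((t:ℂ) * Complex.I))).im)
        (2 * ((starRingEnd ℂ) (W z0) * (d * (z0 * Complex.I))).re) 0 := by
      have h := (hre2.mul hre2).add (him2.mul him2)
      rw [hzero] at h
      refine h.congr_deriv ?_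
      simp [Complex.mul_re, Complex.conj_re, Complex.conj_im]
      ring
    have hmax : IsLocalMax (fun t : ℝ => (W (z0 * Complex.exp ((t:ℂ) * Complex.I))).re
        * (W (z0 * Complex.exp ((t:ℂ) * Complex.I))).re
        + (W (z0 * Complex.exp ((t:ℂ) * Complex.I))).im
        * (W (z0 * Complex.exp ((t:ℂ) * Complex.I))).im) 0 := by
      apply Filter.Eventually.of_forall
      intro t
      have hval : ∀ s : ℝ, (W (z0 * Complex.exp ((s:ℂ) * Complex.I))).re
          * (W (z0 * Complex.exp ((s:ℂ) * Complex.I))).re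
          + (W (z0 * Complex.exp ((s:ℂ) * Complex.I))).im
          * (W (z0 * Complex.exp ((s:ℂ) * Complex.I))).im
          = ‖W (z0 * Complex.exp ((s:ℂ) * Complex.I))‖ ^ 2 := by
        intro s; rw [Complex.sq_norm, Complex.normSq_apply]
      simp only [hval]
      have hb : ‖W (z0 * Complex.exp ((t:ℂ) * Complex.I))‖ ≤ l := by
        apply hWb
        rw [norm_mul]
        have : ‖Complex.exp ((t:ℂ) * Complex.I)‖ = 1 := by
          rw [show ‖Complex.exp ((t:ℂ) * Complex.I)‖
            = ‖Complex.exp ((t:ℂ) * Complex.I)‖ from rfl]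
          exact Complex.norm_exp_ofReal_mul_I t
        rw [this, mul_one]
      have hb0 : ‖W (z0 * Complex.exp (((0:ℝ):ℂ) * Complex.I))‖ = l := by
        rw [hzero, hWz0]
      rw [hb0]
      have := norm_nonneg (W (z0 * Complex.exp ((t:ℂ) * Complex.I)))
      nlinarith
    have h0 := hmax.hasDerivAt_eq_zero hψ
    have hrw : (starRingEnd ℂ) (W z0) * (d * (z0 * Complex.I))
        = ((starRingEnd ℂ) (W z0) * (d * z0)) * Complex.I := by ring
    rw [hrw] at h0
    rw [Complex.mul_I_re] at h0
    rw [hq2_def]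
    linarith
  -- conclude z0 * d = m * W z0 with m real ≥ 1
  have hW0ne : W z0 ≠ 0 := by
    intro h
    rw [h] at hWz0
    simp at hWz0
    exact hlpos.ne' hWz0.symm
  have hq : (starRingEnd ℂ) (W z0) * (d * z0) = ((q1:ℝ) : ℂ) := by
    apply Complex.ext
    · rw [Complex.ofReal_re]
    · rw [Complex.ofReal_im]
      exact hq2
  set m : ℝ := q1 / l^2 with hm_def
  have hm1 : 1 ≤ m := by
    rw [hm_def, le_div_iff₀ (by positivity)]
    linarith
  have hzd : z0 * d = (m:ℂ) * W z0 := by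
    have hnormSq : (starRingEnd ℂ) (W z0) * W z0 = ((l^2 : ℝ) : ℂ) := by
      rw [← Complex.normSq_eq_conj_mul_self, Complex.normSq_eq_norm_sq, hWz0]
    have h2 : ((l^2:ℝ):ℂ) * (z0 * d) = (q1:ℂ) * W z0 := by
      calc ((l^2:ℝ):ℂ) * (z0 * d) = ((starRingEnd ℂ) (W z0) * W z0) * (z0 * d) := by
            rw [hnormSq]
        _ = ((starRingEnd ℂ) (W z0) * (d * z0)) * W z0 := by ring
        _ = (q1:ℂ) * W z0 := by rw [hq]
    have hl2 : ((l:ℂ))^2 ≠ 0 := by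
      have h : (l:ℂ) ≠ 0 := by
        norm_cast
        exact hlpos.ne'
      exact pow_ne_zero 2 h
    push_cast at h2
    rw [hm_def]
    push_cast
    rw [div_mul_eq_mul_div, eq_div_iff hl2]
    linear_combination h2
  -- express the derivative relation in terms of P
  have hWz0val : W z0 = (P - 1) / (P + 1) := rfl
  have hz0P' : z0 * P' = (m:ℂ) * (P - 1) * (P + 1) / 2 := by
    have h3 : z0 * (2 * P' / (P+1)^2) = (m:ℂ) * ((P-1)/(P+1)) := by
      rw [← hd_def, ← hWz0val]
      exact hzd
    have e1 : z0 * (2 * P' / (P+1)^2) * (P+1)^2 = z0 * 2 * P' := by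
      field_simp
    have e2 : (m:ℂ) * ((P-1)/(P+1)) * (P+1)^2 = (m:ℂ) * (P-1) * (P+1) := by
      field_simp
    have h4 : z0 * 2 * P' = (m:ℂ) * (P-1) * (P+1) := by
      rw [← e1, h3, e2]
    rw [eq_div_iff (two_ne_zero' ℂ)]
    linear_combination h4
  -- express P' in terms of f
  have hfd0 : HasDerivAt f F1 z0 := (hfn z0 hz0disc).differentiableAt.hasDerivAt
  have hf'd0 : HasDerivAt (deriv f) F2 z0 := (hf'n z0 hz0disc).differentiableAt.hasDerivAt
  have hP'eq : P' = ((F1 + z0*F2) * F - z0*F1*F1)/F^2 := by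
    have hev : p =ᶠ[𝓝 z0] fun w => w * deriv f w / f w := by
      filter_upwards [isOpen_ne.mem_nhds hz0ne] with x hx
      exact hpval x hx
    have hnum : HasDerivAt (fun w => w * deriv f w) (F1 + z0 * F2) z0 := by
      have h := (hasDerivAt_id z0).mul hf'd0
      refine h.congr_deriv ?_
      simp [hF1_def]
    have hdd : HasDerivAt (fun w => w * deriv f w / f w)
        (((F1 + z0*F2) * F - z0*F1*F1)/F^2) z0 := by
      have h := hnum.div hfd0 hF
      exact h
    rw [hP'_def, hev.deriv_eq]
    exact hdd.deriv
  have hP : P = z0 * F1 / F := hpval z0 hz0ne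
  have hPne : P ≠ 0 := by
    rw [hP]
    exact div_ne_zero (mul_ne_zero hz0ne hF1) hF
  -- the key identity for the hypothesis expression
  have hA : 1 + z0 * F2 / F1 - z0 * F1 / F = z0 * P' / P := by
    rw [hP'eq, hP]
    field_simp
  have hBsum : 1 + z0 * F2 / F1 + z0 * F1 / F = (1 + z0 * F2 / F1 - z0 * F1 / F) + 2 * P := by
    rw [hP]
    ring
  rw [hBsum, hA] at hB
  have hAval : z0 * P' / P = (m:ℂ) * (P - 1) * (P + 1) / (2 * P) := by
    rw [hz0P']
    field_simp
  rw [hAval] at hB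
  -- final numerical contradiction
  set a1 : ℝ := ‖P + 1‖ with ha1_def
  set aP : ℝ := ‖P‖ with haP_def
  have ha1 : 0 < a1 := habs1
  have haP : 0 < aP := by
    rw [haP_def]
    simpa [norm_pos_iff] using hPne
  have hm0 : (0:ℝ) ≤ m := by linarith
  have habsA : ‖(m:ℂ) * (P - 1) * (P + 1) / (2 * P)‖
      = m * (l * a1) * a1 / (2 * aP) := by
    rw [norm_div, norm_mul, norm_mul, norm_mul, hEq]
    rw [Complex.norm_real, Real.norm_of_nonneg hm0]
    rw [ha1_def, haP_def]
    norm_num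
  have h2P : ‖2 * P‖ ≤ (1 + l) * a1 := by
    have hsplit : (2:ℂ) * P = (P + 1) + (P - 1) := by ring
    rw [hsplit]
    calc ‖(P + 1) + (P - 1)‖ ≤ ‖P + 1‖ + ‖P - 1‖ :=
          norm_add_le _ _
      _ = a1 + l * a1 := by rw [hEq, ha1_def]
      _ = (1 + l) * a1 := by ring
  have h2P' : ‖2 * P‖ = 2 * aP := by
    rw [norm_mul]
    norm_num
    rw [haP_def]
  have hBle : ‖(m:ℂ) * (P - 1) * (P + 1) / (2 * P) + 2 * P‖
      ≤ m * (l * a1) * a1 / (2 * aP) + (1 + l) * a1 := by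
    calc ‖(m:ℂ) * (P - 1) * (P + 1) / (2 * P) + 2 * P‖
        ≤ ‖(m:ℂ) * (P - 1) * (P + 1) / (2 * P)‖ + ‖2 * P‖ :=
          norm_add_le _ _
      _ ≤ m * (l * a1) * a1 / (2 * aP) + (1 + l) * a1 := by
          rw [habsA]
          linarith
  have hδpos : 0 < δ := by
    rw [hδ]
    have : (0:ℝ) < 1 + 3*l + l^2 := by nlinarith
    positivity
  have hfin : m * (l * a1) * a1 / (2 * aP)
      < δ * (m * (l * a1) * a1 / (2 * aP) + (1 + l) * a1) := by
    rw [habsA] at hB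
    calc m * (l * a1) * a1 / (2 * aP) < δ * ‖(m:ℂ) * (P - 1) * (P + 1) / (2 * P)
        + 2 * P‖ := hB
      _ ≤ δ * (m * (l * a1) * a1 / (2 * aP) + (1 + l) * a1) := by
          apply mul_le_mul_of_nonneg_left hBle hδpos.le
  have h2a : 2 * aP ≤ (1 + l) * a1 := by
    rw [← h2P']
    exact h2P
  have hD : (0:ℝ) < 1 + 3*l + l^2 := by nlinarith
  rw [hδ] at hfin
  set X : ℝ := m * (l * a1) * a1 / (2 * aP) with hX_def
  have hX2 : X * (2 * aP) = m * (l * a1) * a1 := by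
    rw [hX_def]
    field_simp
  rw [div_mul_eq_mul_div, lt_div_iff₀ hD] at hfin
  -- hfin : X * (1+3l+l²) < l * (X + (1+l)*a1)
  have key : X * (1 + 3*l + l^2) * (2 * aP) < l * (X + (1 + l) * a1) * (2 * aP) :=
    mul_lt_mul_of_pos_right hfin (by linarith)
  have e3 : X * (1 + 3*l + l^2) * (2 * aP) = m * (l * a1) * a1 * (1 + 3*l + l^2) := by
    rw [mul_right_comm, hX2]
  have e4 : l * (X + (1 + l) * a1) * (2 * aP)
      = l * (m * (l * a1) * a1) + l * ((1 + l) * a1) * (2 * aP) := by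
    have e5 : l * (X + (1 + l) * a1) * (2 * aP)
        = l * (X * (2 * aP)) + l * ((1 + l) * a1) * (2 * aP) := by ring
    rw [e5, hX2]
  rw [e3, e4] at key
  have h6 : l * ((1 + l) * a1) * (2 * aP) ≤ l * ((1 + l) * a1) * ((1 + l) * a1) := by
    apply mul_le_mul_of_nonneg_left h2a
    positivity
  have h7 : (0:ℝ) ≤ (m - 1) * (l * a1 * a1 * (1 + l)^2) :=
    mul_nonneg (sub_nonneg.mpr hm1) (by positivity)
  nlinarith [key, h6, h7]
end

section
/- Let 0 ≤ λ < 1. If f is analytic on the unit disc with f(0)=0, f'(0)=1, f and f' nonvanishing on the punctured disc, and |(1 + z f''(z)/f'(z))/(z f'(z)/f(z)) - 1| < (1-λ)/(2-λ)² for all z in the disc (i.e., f ∈ F_{(1-λ)/(2-λ)²}), then |z f'(z)/f(z) - 1| < 1 - λ throughout the disc, i.e., f ∈ S*(λ). -/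
/-- if `f ∈ F_c` with `c = (1-λ)/(2-λ)²`, i.e.
`|(1 + z f''/f')/(z f'/f) - 1| < (1-λ)/(2-λ)²`, then `|z f'/f - 1| < 1 - λ`,
i.e. `f ∈ S*(λ)`. -/
theorem stmt_13 (l : ℝ) (f : ℂ → ℂ)
    (hl0 : 0 ≤ l) (hl1 : l < 1)
    (hf : AnalyticOn ℂ f unitDisc) (hf0 : f 0 = 0) (hf'0 : deriv f 0 = 1)
    (hfz : ∀ z ∈ unitDisc, z ≠ 0 → f z ≠ 0)
    (hf'z : ∀ z ∈ unitDisc, z ≠ 0 → deriv f z ≠ 0)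
    (hbd : ∀ z ∈ unitDisc, z ≠ 0 →
      ‖(1 + z * deriv (deriv f) z / deriv f z) / (z * deriv f z / f z) - 1‖
        < (1 - l) / (2 - l)^2) :
    ∀ z ∈ unitDisc, z ≠ 0 → ‖z * deriv f z / f z - 1‖ < 1 - l := by
  have hopen : IsOpen unitDisc := Metric.isOpen_ball
  have hF : AnalyticOnNhd ℂ f unitDisc := hopen.analyticOn_iff_analyticOnNhd.mp hf
  have hF' : AnalyticOnNhd ℂ (deriv f) unitDisc := hF.deriv
  set c : ℝ := (1 - l) / (2 - l)^2 with hc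
  have h1l : (0:ℝ) < 1 - l := by linarith
  have h2l : (0:ℝ) < 2 - l := by linarith
  have hcpos : 0 < c := by positivity
  have hceq : c * (2 - l)^2 = 1 - l := by
    rw [hc]; field_simp
  have hclt1 : c < 1 := by nlinarith
  have h0mem : (0:ℂ) ∈ unitDisc := Metric.mem_ball_self one_pos
  have hf'ne : ∀ z ∈ unitDisc, deriv f z ≠ 0 := by
    intro z hz
    rcases eq_or_ne z 0 with rfl | hz0
    · rw [hf'0]; exact one_ne_zero
    · exact hf'z z hz hz0
  -- the auxiliary function q = (dslope f 0) / f'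
  set q : ℂ → ℂ := fun w => dslope f 0 w / deriv f w with hqdef
  have hh : AnalyticOnNhd ℂ (dslope f 0) unitDisc := by
    intro z hz
    rcases eq_or_ne z 0 with rfl | hz0
    · rcases hF 0 hz with ⟨p, hp⟩
      exact ⟨p.fslope, hp.has_fpower_series_dslope_fslope⟩
    · have ha : AnalyticAt ℂ (fun w => f w / w) z :=
        (hF z hz).div analyticAt_id hz0
      apply ha.congr
      filter_upwards [isOpen_ne.mem_nhds hz0] with w hw
      rw [dslope_of_ne _ hw, slope_def_field, hf0, sub_zero, sub_zero]
  have hq : AnalyticOnNhd ℂ q unitDisc := fun z hz =>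
    ((hh z hz).div (hF' z hz) (hf'ne z hz))
  have hq' : AnalyticOnNhd ℂ (deriv q) unitDisc := hq.deriv
  have hq0 : q 0 = 1 := by
    simp [hqdef, dslope_same, hf'0]
  have hqz : ∀ z : ℂ, z ≠ 0 → q z = f z / (z * deriv f z) := by
    intro z hz0
    rw [hqdef]
    simp only
    rw [dslope_of_ne _ hz0, slope_def_field, hf0, sub_zero, sub_zero, div_div]
  have hderivq : ∀ z ∈ unitDisc, z ≠ 0 → deriv q z =
      (deriv f z * (z * deriv f z) - f z * (deriv f z + z * deriv (deriv f) z))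
        / (z * deriv f z)^2 := by
    intro z hz hz0
    have hev : q =ᶠ[nhds z] fun w => f w / (w * deriv f w) := by
      filter_upwards [isOpen_ne.mem_nhds hz0] with w hw
      exact hqz w hw
    rw [hev.deriv_eq]
    have hdf : DifferentiableAt ℂ f z := (hF z hz).differentiableAt
    have hdf' : DifferentiableAt ℂ (deriv f) z := (hF' z hz).differentiableAt
    have hden : DifferentiableAt ℂ (fun w => w * deriv f w) z :=
      differentiableAt_fun_id.mul hdf'
    have hdenne : z * deriv f z ≠ 0 := mul_ne_zero hz0 (hf'ne z hz)
    rw [deriv_fun_div hdf hden hdenne, deriv_fun_mul differentiableAt_fun_id hdf']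
    simp
  have hkey : ∀ z ∈ unitDisc, z ≠ 0 →
      ((1 + z * deriv (deriv f) z / deriv f z) / (z * deriv f z / f z) - 1)
        = -(z * deriv q z) := by
    intro z hz hz0
    rw [hderivq z hz hz0]
    have h1 : f z ≠ 0 := hfz z hz hz0
    have h2 : deriv f z ≠ 0 := hf'ne z hz
    field_simp
    ring
  -- Schwarz lemma applied to g w = w * deriv q w
  set g : ℂ → ℂ := fun w => w * deriv q w with hgdef
  have hg0 : g 0 = 0 := by simp [hgdef]
  have hgd : DifferentiableOn ℂ g (Metric.ball (0:ℂ) 1) :=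
    differentiableOn_id.mul (hq'.differentiableOn)
  have hmaps : Set.MapsTo g (Metric.ball (0:ℂ) 1) (Metric.ball (g 0) c) := by
    intro w hw
    rw [hg0, mem_ball_zero_iff]
    rcases eq_or_ne w 0 with rfl | hw0
    · simpa [hgdef] using hcpos
    · have := hbd w hw hw0
      rw [hkey w hw hw0] at this
      simpa [hgdef] using this
  have hq'bd : ∀ w ∈ Metric.ball (0:ℂ) 1, ‖deriv q w‖ ≤ c := by
    intro w hw
    have hs := Complex.norm_dslope_le_div_of_mapsTo_ball hgd (hmaps.mono_right Metric.ball_subset_closedBall) hw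
    rw [div_one] at hs
    rcases eq_or_ne w 0 with rfl | hw0
    · rw [dslope_same] at hs
      have : deriv g 0 = deriv q 0 := by
        have : DifferentiableAt ℂ (deriv q) 0 := (hq' 0 h0mem).differentiableAt
        rw [hgdef, deriv_fun_mul differentiableAt_fun_id this]
        simp
      rwa [this] at hs
    · rw [dslope_of_ne _ hw0] at hs
      have he : slope g 0 w = deriv q w := by
        rw [slope_def_field]
        simp only [hgdef]
        field_simp
        ring
      rwa [he] at hs
  intro z hz hz0
  have hmvt : ‖q z - q 0‖ ≤ c * ‖z - 0‖ :=
    Convex.norm_image_sub_le_of_norm_deriv_le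
      (fun x hx => (hq x hx).differentiableAt) hq'bd (convex_ball 0 1) h0mem hz
  rw [hq0, sub_zero] at hmvt
  have hzlt : ‖z‖ < 1 := by simpa [unitDisc] using hz
  have ha : ‖q z - 1‖ < c := by
    calc ‖q z - 1‖ ≤ c * ‖z‖ := hmvt
    _ < c * 1 := by
        apply mul_lt_mul_of_pos_left hzlt hcpos
    _ = c := mul_one c
  have hb : 1 - c < ‖q z‖ := by
    have htri : (1:ℝ) ≤ ‖q z‖ + ‖q z - 1‖ := by
      have := norm_sub_le (q z) (q z - 1)
      simpa using this
    linarith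
  have hbpos : 0 < ‖q z‖ := by linarith
  have hqne : q z ≠ 0 := by
    intro h; rw [h] at hbpos; simp at hbpos
  have hrewrite : z * deriv f z / f z - 1 = (1 - q z) / q z := by
    rw [hqz z hz0]
    have h1 : f z ≠ 0 := hfz z hz hz0
    have h2 : deriv f z ≠ 0 := hf'ne z hz
    field_simp
  rw [hrewrite, norm_div]
  rw [div_lt_iff₀ hbpos]
  have habs : ‖1 - q z‖ = ‖q z - 1‖ := by
    rw [← norm_neg]; ring_nf
  rw [habs]
  have hcle : c ≤ (1 - l) * (1 - c) := by nlinarith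
  nlinarith
end
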